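/- arXiv:1604.00456 — 5 statements merged into one kernel-verified Lean document; each statement's English description precedes it below -/
import Mathlib

section
/- Let C be a bounded convex subset of ℝⁿ, let P be a plank (a set of the form {x : a ≤ ⟨x, V⟩ ≤ b} for a unit vector V and reals a ≤ b) of width w = b − a in direction V, and set X = C \ P. If X is nonempty, convex, and 0 < w_V(X) with w_V(C) > 0, then for every unit vector v, w_v(X)/w_v(C) ≥ w_V(X)/w_V(C) (interpreting the left side as +∞ when w_v(C) = 0 unless w_v(X) = 0 too, in which case the claim is that w_v(X) ≥ (w_V(X)/w_V(C)) · w_v(C)). -/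
noncomputable def width {n : ℕ} (K : Set (EuclideanSpace ℝ (Fin n)))
    (v : EuclideanSpace ℝ (Fin n)) : ℝ :=
  sSup ((fun x => (inner ℝ x v : ℝ)) '' K) - sInf ((fun x => (inner ℝ x v : ℝ)) '' K)

lemma inner_image_bdd {n : ℕ} {K : Set (EuclideanSpace ℝ (Fin n))}
    (hb : Bornology.IsBounded K) (u : EuclideanSpace ℝ (Fin n)) :
    BddAbove ((fun x => (inner ℝ x u : ℝ)) '' K) ∧
      BddBelow ((fun x => (inner ℝ x u : ℝ)) '' K) := by
  obtain ⟨r, hr⟩ := hb.subset_closedBall 0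
  constructor
  · refine ⟨r * ‖u‖, ?_⟩
    rintro z ⟨x, hx, rfl⟩
    have h1 : ‖x‖ ≤ r := by simpa using hr hx
    calc (inner ℝ x u : ℝ) ≤ ‖x‖ * ‖u‖ := real_inner_le_norm x u
      _ ≤ r * ‖u‖ := by nlinarith [norm_nonneg u, norm_nonneg x]
  · refine ⟨-(r * ‖u‖), ?_⟩
    rintro z ⟨x, hx, rfl⟩
    have h1 : ‖x‖ ≤ r := by simpa using hr hx
    have h2 : |(inner ℝ x u : ℝ)| ≤ ‖x‖ * ‖u‖ := abs_real_inner_le_norm x u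
    have h3 : ‖x‖ * ‖u‖ ≤ r * ‖u‖ := by nlinarith [norm_nonneg u, norm_nonneg x]
    have := abs_le.mp h2
    simp only
    linarith [this.1]

lemma width_neg {n : ℕ} (K : Set (EuclideanSpace ℝ (Fin n)))
    (u : EuclideanSpace ℝ (Fin n)) : width K (-u) = width K u := by
  unfold width
  have himg : (fun x => (inner ℝ x (-u) : ℝ)) '' K
      = -((fun x => (inner ℝ x u : ℝ)) '' K) := by
    ext z
    simp only [Set.mem_image, Set.mem_neg]
    constructor
    · rintro ⟨x, hx, rfl⟩; exact ⟨x, hx, by rw [inner_neg_right]; ring⟩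
    · rintro ⟨x, hx, hz⟩; exact ⟨x, hx, by rw [inner_neg_right, hz]; ring⟩
  have h1 : sSup (-((fun x => (inner ℝ x u : ℝ)) '' K)) = -sInf ((fun x => (inner ℝ x u : ℝ)) '' K) := by
    rw [Real.sInf_def, neg_neg]
  have h2 : sInf (-((fun x => (inner ℝ x u : ℝ)) '' K)) = -sSup ((fun x => (inner ℝ x u : ℝ)) '' K) := by
    rw [Real.sInf_def, neg_neg]
  rw [himg, h1, h2]
  ring

lemma width_ratio_aux {n : ℕ} (C : Set (EuclideanSpace ℝ (Fin n)))
    (hb : Bornology.IsBounded C) (hc : Convex ℝ C)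
    (V : EuclideanSpace ℝ (Fin n)) (a b : ℝ)
    (P : Set (EuclideanSpace ℝ (Fin n)))
    (hP : P = {x | a ≤ (inner ℝ x V : ℝ) ∧ (inner ℝ x V : ℝ) ≤ b})
    (X : Set (EuclideanSpace ℝ (Fin n))) (hX : X = C \ P)
    (hne : X.Nonempty)
    (hside : ∀ x ∈ X, b ≤ (inner ℝ x V : ℝ))
    (hwX : 0 < width X V) (hwC : 0 < width C V)
    (v : EuclideanSpace ℝ (Fin n)) :
    width X v ≥ (width X V / width C V) * width C v := by
  have hXC : X ⊆ C := by rw [hX]; exact Set.diff_subset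
  have hCne : C.Nonempty := hne.mono hXC
  have hbX : Bornology.IsBounded X := hb.subset hXC
  obtain ⟨bAC, bBC⟩ := inner_image_bdd hb V
  obtain ⟨bAX, bBX⟩ := inner_image_bdd hbX V
  obtain ⟨fAC, fBC⟩ := inner_image_bdd hb v
  obtain ⟨fAX, fBX⟩ := inner_image_bdd hbX v
  set g : EuclideanSpace ℝ (Fin n) → ℝ := fun x => inner ℝ x V with hg
  set f : EuclideanSpace ℝ (Fin n) → ℝ := fun x => inner ℝ x v with hf
  set M : ℝ := sSup (g '' C) with hM
  set m : ℝ := sInf (g '' C) with hm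
  have hwCeq : width C V = M - m := rfl
  have hwXeq : width X V = sSup (g '' X) - sInf (g '' X) := rfl
  have hMm : 0 < M - m := by rw [hwCeq] at hwC; exact hwC
  set b' : ℝ := max b m with hb'
  -- bounds on sup/inf over X
  have hsupX : sSup (g '' X) ≤ M := csSup_le_csSup bAC (hne.image g) (Set.image_mono (f := g) hXC)
  have hinfX : b' ≤ sInf (g '' X) := by
    apply le_csInf (hne.image g)
    rintro z ⟨x, hx, rfl⟩
    refine max_le (hside x hx) ?_
    exact csInf_le_csInf bBC (hne.image g) (Set.image_mono (f := g) hXC) |>.trans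
      (csInf_le bBX ⟨x, hx, rfl⟩)
  have hwXle : width X V ≤ M - b' := by rw [hwXeq]; linarith
  have hb'M : b' < M := by linarith [hwX, hwXle]
  have hb'm : m ≤ b' := le_max_right b m
  set t : ℝ := (M - b') / (M - m) with ht
  have ht0 : 0 < t := div_pos (by linarith) hMm
  have ht1 : t ≤ 1 := by rw [ht, div_le_one hMm]; linarith
  -- core: homothety argument
  have core : ∀ t' : ℝ, 0 < t' → t' < t → t' * width C v ≤ width X v := by
    intro t' ht'0 ht'lt
    have ht'1 : t' < 1 := lt_of_lt_of_le ht'lt ht1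
    have h1t' : 0 < 1 - t' := by linarith
    have h3 : t' * (M - m) < M - b' := (lt_div_iff₀ hMm).mp ht'lt
    set δ : ℝ := (1 - t') * M + t' * m - b with hδdef
    have hδ : 0 < δ := by
      have hbb' : b ≤ b' := le_max_left b m
      nlinarith
    set ε : ℝ := δ / (2 * (1 - t')) with hε
    have hε0 : 0 < ε := div_pos hδ (by linarith)
    have hεhalf : (1 - t') * ε = δ / 2 := by
      rw [hε]; field_simp
    obtain ⟨z, ⟨p, hpC, rfl⟩, hpz⟩ :=
      exists_lt_of_lt_csSup (hCne.image g) (show M - ε < M by linarith)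
    -- the homothety image lies in X, and f-values scale
    have hmem : ∀ x ∈ C, ((1 - t') • p + t' • x) ∈ X := by
      intro x hxC
      have hmemC : ((1 - t') • p + t' • x) ∈ C :=
        hc hpC hxC (le_of_lt h1t') (le_of_lt ht'0) (by ring)
      have hgval : g ((1 - t') • p + t' • x) = (1 - t') * g p + t' * g x := by
        show (inner ℝ ((1 - t') • p + t' • x) V : ℝ) = _
        rw [inner_add_left, real_inner_smul_left, real_inner_smul_left]
      have hgx : m ≤ g x := csInf_le bBC ⟨x, hxC, rfl⟩
      have h4 : (1 - t') * (M - ε) < (1 - t') * g p :=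
        mul_lt_mul_of_pos_left hpz h1t'
      have h5 : t' * m ≤ t' * g x := mul_le_mul_of_nonneg_left hgx (le_of_lt ht'0)
      have hexp : (1 - t') * (M - ε) = (1 - t') * M - (1 - t') * ε := by ring
      have hbig : b < g ((1 - t') • p + t' • x) := by
        rw [hgval]; linarith [hεhalf]
      rw [hX]
      refine ⟨hmemC, ?_⟩
      rw [hP]
      intro hmemP
      exact absurd hmemP.2 (not_le.mpr hbig)
    have hfval : ∀ x : EuclideanSpace ℝ (Fin n),
        f ((1 - t') • p + t' • x) = (1 - t') * f p + t' * f x := by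
      intro x
      show (inner ℝ ((1 - t') • p + t' • x) v : ℝ) = _
      rw [inner_add_left, real_inner_smul_left, real_inner_smul_left]
    -- width X v bounds differences
    have hdiff : ∀ x ∈ C, ∀ y ∈ C, t' * (f x - f y) ≤ width X v := by
      intro x hx y hy
      have hx' := hmem x hx
      have hy' := hmem y hy
      have h6 : f ((1 - t') • p + t' • x) ≤ sSup (f '' X) := le_csSup fAX ⟨_, hx', rfl⟩
      have h7 : sInf (f '' X) ≤ f ((1 - t') • p + t' • y) := csInf_le fBX ⟨_, hy', rfl⟩
      have := hfval x
      have := hfval y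
      have hwXveq : width X v = sSup (f '' X) - sInf (f '' X) := rfl
      rw [hwXveq]
      linarith
    have hwXv0 : 0 ≤ width X v := by
      obtain ⟨x0, hx0⟩ := hne
      have := hdiff x0 (hXC hx0) x0 (hXC hx0)
      linarith
    -- conclude t' * width C v ≤ width X v
    have hCle : sSup (f '' C) - sInf (f '' C) ≤ width X v / t' := by
      have hkey : ∀ x ∈ C, f x ≤ width X v / t' + sInf (f '' C) := by
        intro x hx
        have : f x - width X v / t' ≤ sInf (f '' C) := by
          apply le_csInf (hCne.image f)
          rintro z ⟨y, hy, rfl⟩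
          have := hdiff x hx y hy
          have h8 : f x - f y ≤ width X v / t' := (le_div_iff₀ ht'0).mpr (by linarith)
          linarith
        linarith
      have : sSup (f '' C) ≤ width X v / t' + sInf (f '' C) := by
        apply csSup_le (hCne.image f)
        rintro z ⟨x, hx, rfl⟩
        exact hkey x hx
      linarith
    have hwCveq : width C v = sSup (f '' C) - sInf (f '' C) := rfl
    have h9 : width C v ≤ width X v / t' := by rw [hwCveq]; exact hCle
    have := (le_div_iff₀ ht'0).mp h9
    linarith
  -- pass to the limit t' → t and compare ratios
  have hwCv0 : 0 ≤ width C v := by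
    obtain ⟨x0, hx0⟩ := hCne
    have h6 : f x0 ≤ sSup (f '' C) := le_csSup fAC ⟨x0, hx0, rfl⟩
    have h7 : sInf (f '' C) ≤ f x0 := csInf_le fBC ⟨x0, hx0, rfl⟩
    have hwCveq : width C v = sSup (f '' C) - sInf (f '' C) := rfl
    rw [hwCveq]; linarith
  have hwXv0 : 0 ≤ width X v := by
    obtain ⟨x0, hx0⟩ := hne
    have h6 : f x0 ≤ sSup (f '' X) := le_csSup fAX ⟨x0, hx0, rfl⟩
    have h7 : sInf (f '' X) ≤ f x0 := csInf_le fBX ⟨x0, hx0, rfl⟩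
    have hwXveq : width X v = sSup (f '' X) - sInf (f '' X) := rfl
    rw [hwXveq]; linarith
  have hratio : width X V / width C V ≤ t := by
    rw [hwCeq, ht, div_le_div_iff₀ hMm hMm]
    nlinarith
  by_contra hcon
  push_neg at hcon
  have hlt : width X v < t * width C v :=
    lt_of_lt_of_le hcon (mul_le_mul_of_nonneg_right hratio hwCv0)
  have hwCvpos : 0 < width C v := by nlinarith
  have hlt2 : width X v / width C v < t := (div_lt_iff₀ hwCvpos).mpr hlt
  set t'' : ℝ := (width X v / width C v + t) / 2 with ht''
  have h0t'' : 0 < t'' := by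
    have : 0 ≤ width X v / width C v := div_nonneg hwXv0 (le_of_lt hwCvpos)
    rw [ht'']; linarith
  have ht''t : t'' < t := by rw [ht'']; linarith
  have := core t'' h0t'' ht''t
  have : width X v / width C v < t'' := by rw [ht'']; linarith
  have := (div_lt_iff₀ hwCvpos).mp this
  linarith [core t'' h0t'' ht''t]

theorem width_ratio_of_plank_removal {n : ℕ} (C : Set (EuclideanSpace ℝ (Fin n)))
    (hb : Bornology.IsBounded C) (hc : Convex ℝ C)
    (V : EuclideanSpace ℝ (Fin n)) (hV : ‖V‖ = 1) (a b : ℝ) (hab : a ≤ b)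
    (P : Set (EuclideanSpace ℝ (Fin n)))
    (hP : P = {x | a ≤ (inner ℝ x V : ℝ) ∧ (inner ℝ x V : ℝ) ≤ b})
    (X : Set (EuclideanSpace ℝ (Fin n))) (hX : X = C \ P)
    (hne : X.Nonempty) (hXconv : Convex ℝ X)
    (hwX : 0 < width X V) (hwC : 0 < width C V)
    (v : EuclideanSpace ℝ (Fin n)) (hv : ‖v‖ = 1) :
    width X v ≥ (width X V / width C V) * width C v := by
  have hXP : ∀ x ∈ X, (inner ℝ x V : ℝ) < a ∨ b < (inner ℝ x V : ℝ) := by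
    intro x hx
    rw [hX] at hx
    have := hx.2
    rw [hP] at this
    simp only [Set.mem_setOf_eq, not_and, not_le] at this
    rcases lt_or_ge ((inner ℝ x V : ℝ)) a with h | h
    · exact Or.inl h
    · exact Or.inr (this h)
  by_cases hcase : ∃ x ∈ X, b < (inner ℝ x V : ℝ)
  · -- X on the upper side
    obtain ⟨x0, hx0X, hx0⟩ := hcase
    have hside : ∀ x ∈ X, b ≤ (inner ℝ x V : ℝ) := by
      intro y hyX
      by_contra hy
      push_neg at hy
      have hya : (inner ℝ y V : ℝ) < a := by
        rcases hXP y hyX with h | h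
        · exact h
        · linarith
      -- intermediate point hits the plank
      set gy : ℝ := inner ℝ y V with hgy
      set gx : ℝ := inner ℝ x0 V with hgx
      have hgygx : gy < gx := by rw [hgy, hgx]; linarith
      set s : ℝ := (b - gy) / (gx - gy) with hs
      have hs0 : 0 ≤ s := div_nonneg (by linarith) (by linarith)
      have hs1 : s ≤ 1 := by
        rw [hs, div_le_one (by linarith : (0:ℝ) < gx - gy)]; linarith
      have hzX : (1 - s) • y + s • x0 ∈ X := hXconv hyX hx0X (by linarith) hs0 (by ring)
      have hgz : (inner ℝ ((1 - s) • y + s • x0) V : ℝ) = (1 - s) * gy + s * gx := by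
        rw [hgy, hgx, inner_add_left, real_inner_smul_left, real_inner_smul_left]
      have hne0 : gx - gy ≠ 0 := ne_of_gt (by linarith)
      have hcan : s * (gx - gy) = b - gy := by rw [hs, div_mul_cancel₀ _ hne0]
      have hval : (1 - s) * gy + s * gx = b := by linear_combination hcan
      have := hXP _ hzX
      rw [hgz, hval] at this
      rcases this with h | h
      · linarith
      · linarith
    exact width_ratio_aux C hb hc V a b P hP X hX hne hside hwX hwC v
  · -- X on the lower side: apply aux with -V
    push_neg at hcase
    have hside : ∀ x ∈ X, -a ≤ (inner ℝ x (-V) : ℝ) := by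
      intro x hx
      have h1 := hcase x hx
      have h2 : (inner ℝ x V : ℝ) < a := by
        rcases hXP x hx with h | h
        · exact h
        · exact absurd h (not_lt.mpr h1)
      rw [inner_neg_right]
      linarith
    have hP' : P = {x | -b ≤ (inner ℝ x (-V) : ℝ) ∧ (inner ℝ x (-V) : ℝ) ≤ -a} := by
      rw [hP]; ext x
      simp only [Set.mem_setOf_eq, inner_neg_right]
      constructor
      · rintro ⟨h1, h2⟩; constructor <;> linarith
      · rintro ⟨h1, h2⟩; constructor <;> linarith
    have h := width_ratio_aux C hb hc (-V) (-b) (-a) P hP' X hX hne hside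
      (by rwa [width_neg]) (by rwa [width_neg]) v
    rwa [width_neg, width_neg] at h
end

section
/- Suppose C is a bounded convex subset of ℝⁿ and P₁, …, P_k are planks in directions v₁, …, v_k with widths w₁, …, w_k whose union covers C. Suppose C \ P₁ is convex, and suppose that the affine plank inequality ∑_{i=2}^{k} wᵢ / w_{vᵢ}(C \ P₁) ≥ 1 holds for the convex set C \ P₁ (with the convention that a term with zero denominator is +∞, and the empty sum over a nonempty covered set being interpreted appropriately). Then ∑_{i=1}^{k} wᵢ / w_{vᵢ}(C) ≥ 1. -/
namespace PlankRemovalAux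

open Bornology

variable {n : ℕ}

lemma bddAbove_img {C : Set (EuclideanSpace ℝ (Fin n))} (hb : IsBounded C)
    (v : EuclideanSpace ℝ (Fin n)) :
    BddAbove ((fun x => (inner ℝ x v : ℝ)) '' C) := by
  obtain ⟨R, hR⟩ := hb.subset_closedBall 0
  refine ⟨R * ‖v‖, ?_⟩
  rintro y ⟨x, hx, rfl⟩
  have h1 : ‖x‖ ≤ R := by simpa using hR hx
  calc (inner ℝ x v : ℝ) ≤ ‖x‖ * ‖v‖ := real_inner_le_norm x v
    _ ≤ R * ‖v‖ := by gcongr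

lemma bddBelow_img {C : Set (EuclideanSpace ℝ (Fin n))} (hb : IsBounded C)
    (v : EuclideanSpace ℝ (Fin n)) :
    BddBelow ((fun x => (inner ℝ x v : ℝ)) '' C) := by
  obtain ⟨R, hR⟩ := hb.subset_closedBall 0
  refine ⟨-(R * ‖v‖), ?_⟩
  rintro y ⟨x, hx, rfl⟩
  have h1 : ‖x‖ ≤ R := by simpa using hR hx
  have h2 : |(inner ℝ x v : ℝ)| ≤ ‖x‖ * ‖v‖ := abs_real_inner_le_norm x v
  have h3 : ‖x‖ * ‖v‖ ≤ R * ‖v‖ := by gcongr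
  have := neg_abs_le (inner ℝ x v : ℝ)
  simp only []
  linarith

set_option maxHeartbeats 1000000 in
lemma lemA {C : Set (EuclideanSpace ℝ (Fin n))} (hb : IsBounded C) (hc : Convex ℝ C)
    (hne : C.Nonempty) (v₀ u : EuclideanSpace ℝ (Fin n)) (b : ℝ)
    (hmb : sInf ((fun x => (inner ℝ x v₀ : ℝ)) '' C) ≤ b)
    (hbM : b < sSup ((fun x => (inner ℝ x v₀ : ℝ)) '' C)) :
    (sSup ((fun x => (inner ℝ x v₀ : ℝ)) '' C) - b) *
        (sSup ((fun x => (inner ℝ x u : ℝ)) '' C) - sInf ((fun x => (inner ℝ x u : ℝ)) '' C)) ≤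
      (sSup ((fun x => (inner ℝ x v₀ : ℝ)) '' C) - sInf ((fun x => (inner ℝ x v₀ : ℝ)) '' C)) *
        (sSup ((fun x => (inner ℝ x u : ℝ)) '' (C ∩ {x | b < (inner ℝ x v₀ : ℝ)})) -
         sInf ((fun x => (inner ℝ x u : ℝ)) '' (C ∩ {x | b < (inner ℝ x v₀ : ℝ)}))) := by
  set f : EuclideanSpace ℝ (Fin n) → ℝ := fun x => (inner ℝ x v₀ : ℝ) with hf
  set g : EuclideanSpace ℝ (Fin n) → ℝ := fun x => (inner ℝ x u : ℝ) with hg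
  set C' : Set (EuclideanSpace ℝ (Fin n)) := C ∩ {x | b < f x} with hC'
  set M : ℝ := sSup (f '' C) with hM
  set m : ℝ := sInf (f '' C) with hm
  set S : ℝ := sSup (g '' C) with hS
  set I : ℝ := sInf (g '' C) with hI
  set S' : ℝ := sSup (g '' C') with hS'
  set I' : ℝ := sInf (g '' C') with hI'
  have hbC' : IsBounded C' := hb.subset Set.inter_subset_left
  -- C' is nonempty
  obtain ⟨z₀y, ⟨z₀, hz₀C, rfl⟩, hz₀⟩ := exists_lt_of_lt_csSup (hne.image f) hbM
  have hC'ne : C'.Nonempty := ⟨z₀, hz₀C, hz₀⟩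
  have hMb : (0:ℝ) < M - b := by linarith
  have hW : (0:ℝ) < M - m := by linarith
  have hD'0 : (0:ℝ) ≤ S' - I' := by
    have h1 : g z₀ ≤ S' := le_csSup (bddAbove_img hbC' u) ⟨z₀, ⟨hz₀C, hz₀⟩, rfl⟩
    have h2 : I' ≤ g z₀ := csInf_le (bddBelow_img hbC' u) ⟨z₀, ⟨hz₀C, hz₀⟩, rfl⟩
    linarith
  rcases le_or_gt (S - I) 0 with hD | hD
  · have h0 : (M - b) * (S - I) ≤ 0 := mul_nonpos_of_nonneg_of_nonpos hMb.le hD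
    have h1 : 0 ≤ (M - m) * (S' - I') := mul_nonneg hW.le hD'0
    linarith only [h0, h1]
  · -- main case: D > 0
    refine le_of_forall_pos_le_add (fun δ hδ => ?_)
    set D : ℝ := S - I with hDdef
    set ε : ℝ := min (δ / (2 * (D + (M - b)))) (min ((M - b) / 3) (D / 3)) with hε
    have hDMb : (0:ℝ) < 2 * (D + (M - b)) := by linarith
    have hεpos : 0 < ε :=
      lt_min (div_pos hδ hDMb) (lt_min (by linarith) (by linarith))
    have hεMb : ε ≤ (M - b) / 3 := le_trans (min_le_right _ _) (min_le_left _ _)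
    have hεD : ε ≤ D / 3 := le_trans (min_le_right _ _) (min_le_right _ _)
    have hεδ : ε ≤ δ / (2 * (D + (M - b))) := min_le_left _ _
    obtain ⟨xy, ⟨x, hx, rfl⟩, hgx⟩ := exists_lt_of_lt_csSup (hne.image g)
      (by linarith : S - ε < S)
    obtain ⟨yy, ⟨y, hy, rfl⟩, hgy⟩ := exists_lt_of_csInf_lt (hne.image g)
      (by linarith : I < I + ε)
    obtain ⟨zy, ⟨z, hz, rfl⟩, hfz⟩ := exists_lt_of_lt_csSup (hne.image f)
      (by linarith : M - ε < M)
    have hfzM : f z ≤ M := le_csSup (bddAbove_img hb v₀) ⟨z, hz, rfl⟩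
    have hfxm : m ≤ f x := csInf_le (bddBelow_img hb v₀) ⟨x, hx, rfl⟩
    have hfym : m ≤ f y := csInf_le (bddBelow_img hb v₀) ⟨y, hy, rfl⟩
    have hden : (0:ℝ) < f z - m := by linarith
    set s : ℝ := max 0 ((b - m + ε) / (f z - m)) with hs
    have hs0 : 0 ≤ s := le_max_left _ _
    have hratio1 : (b - m + ε) / (f z - m) ≤ 1 := by
      rw [div_le_one hden]; linarith
    have hs1 : s ≤ 1 := max_le zero_le_one hratio1
    have hsl : b - m + ε ≤ s * (f z - m) := by
      have h1 : (b - m + ε) / (f z - m) ≤ s := le_max_right _ _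
      have h2 : ((b - m + ε) / (f z - m)) * (f z - m) ≤ s * (f z - m) :=
        mul_le_mul_of_nonneg_right h1 hden.le
      rwa [div_mul_cancel₀ _ hden.ne'] at h2
    -- the shifted points
    set x' := (1 - s) • x + s • z with hx'
    set y' := (1 - s) • y + s • z with hy'
    have hx'C : x' ∈ C := hc hx hz (by linarith) hs0 (by ring)
    have hy'C : y' ∈ C := hc hy hz (by linarith) hs0 (by ring)
    have hfx' : f x' = (1 - s) * f x + s * f z := by
      simp only [hf, hx', inner_add_left, real_inner_smul_left]
    have hfy' : f y' = (1 - s) * f y + s * f z := by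
      simp only [hf, hy', inner_add_left, real_inner_smul_left]
    have hgx' : g x' = (1 - s) * g x + s * g z := by
      simp only [hg, hx', inner_add_left, real_inner_smul_left]
    have hgy' : g y' = (1 - s) * g y + s * g z := by
      simp only [hg, hy', inner_add_left, real_inner_smul_left]
    have hfx'b : b < f x' := by
      have h1 : (1 - s) * m ≤ (1 - s) * f x :=
        mul_le_mul_of_nonneg_left hfxm (by linarith)
      rw [hfx']; linarith only [h1, hsl, hεpos]
    have hfy'b : b < f y' := by
      have h1 : (1 - s) * m ≤ (1 - s) * f y :=
        mul_le_mul_of_nonneg_left hfym (by linarith)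
      rw [hfy']; linarith only [h1, hsl, hεpos]
    have hx'C' : x' ∈ C' := ⟨hx'C, hfx'b⟩
    have hy'C' : y' ∈ C' := ⟨hy'C, hfy'b⟩
    -- width C' lower bound
    have hS'x : g x' ≤ S' := le_csSup (bddAbove_img hbC' u) ⟨x', hx'C', rfl⟩
    have hI'y : I' ≤ g y' := csInf_le (bddBelow_img hbC' u) ⟨y', hy'C', rfl⟩
    have hgdiff : (1 - s) * (D - 2 * ε) ≤ S' - I' := by
      have h1 : g x' - g y' = (1 - s) * (g x - g y) := by rw [hgx', hgy']; ring
      have h2 : D - 2 * ε ≤ g x - g y := by linarith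
      have h3 : (1 - s) * (D - 2 * ε) ≤ (1 - s) * (g x - g y) :=
        mul_le_mul_of_nonneg_left h2 (by linarith)
      linarith
    -- key coefficient bound
    have h1s : M - b - 2 * ε ≤ (1 - s) * (M - m) := by
      rcases le_or_gt (b - m + ε) 0 with hcase | hcase
      · have hr : (b - m + ε) / (f z - m) ≤ 0 := div_nonpos_of_nonpos_of_nonneg hcase hden.le
        have hs0' : s = 0 := by rw [hs]; exact max_eq_left hr
        rw [hs0']; linarith only [hmb, hεpos]
      · have hr0 : 0 ≤ (b - m + ε) / (f z - m) := le_of_lt (div_pos hcase hden)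
        have hseq : s = (b - m + ε) / (f z - m) := by rw [hs]; exact max_eq_right hr0
        set q : ℝ := (b - m + ε) / (f z - m) with hq
        have hq0 : 0 ≤ q := hr0
        have hq1 : q ≤ 1 := hratio1
        have hqmul : q * (f z - m) = b - m + ε := div_mul_cancel₀ _ hden.ne'
        have hfzm : M - m - ε ≤ f z - m := by linarith
        have h2 : q * (M - m - ε) ≤ q * (f z - m) :=
          mul_le_mul_of_nonneg_left hfzm hq0
        have h3 : q * ε ≤ 1 * ε := mul_le_mul_of_nonneg_right hq1 hεpos.le
        rw [hseq]
        linarith only [h2, h3, hqmul]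
    -- combine
    have hDε : (0:ℝ) ≤ D - 2 * ε := by linarith
    have hbig : (M - b - 2 * ε) * (D - 2 * ε) ≤ (M - m) * (S' - I') := by
      calc (M - b - 2 * ε) * (D - 2 * ε) ≤ ((1 - s) * (M - m)) * (D - 2 * ε) :=
            mul_le_mul_of_nonneg_right h1s hDε
        _ = (M - m) * ((1 - s) * (D - 2 * ε)) := by ring
        _ ≤ (M - m) * (S' - I') := mul_le_mul_of_nonneg_left hgdiff hW.le
    have hεδ' : ε * (2 * (D + (M - b))) ≤ δ := by
      have h := hεδ
      rw [le_div_iff₀ hDMb] at h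
      exact h
    have hexp : (M - b) * D =
        (M - b - 2 * ε) * (D - 2 * ε) + ε * (2 * (D + (M - b))) - 4 * ε ^ 2 := by ring
    linarith only [hbig, hεδ', hexp, sq_nonneg ε]

lemma img_neg (C : Set (EuclideanSpace ℝ (Fin n))) (v₀ : EuclideanSpace ℝ (Fin n)) :
    (fun x => (inner ℝ x (-v₀) : ℝ)) '' C = -((fun x => (inner ℝ x v₀ : ℝ)) '' C) := by
  rw [← Set.image_neg_eq_neg, ← Set.image_comp]
  apply Set.image_congr
  intro x _
  simp [inner_neg_right]

lemma sSup_img_neg (C : Set (EuclideanSpace ℝ (Fin n))) (v₀ : EuclideanSpace ℝ (Fin n)) :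
    sSup ((fun x => (inner ℝ x (-v₀) : ℝ)) '' C) = -sInf ((fun x => (inner ℝ x v₀ : ℝ)) '' C) := by
  rw [img_neg, Real.sInf_def, neg_neg]

lemma sInf_img_neg (C : Set (EuclideanSpace ℝ (Fin n))) (v₀ : EuclideanSpace ℝ (Fin n)) :
    sInf ((fun x => (inner ℝ x (-v₀) : ℝ)) '' C) = -sSup ((fun x => (inner ℝ x v₀ : ℝ)) '' C) := by
  rw [img_neg, Real.sInf_def, neg_neg]

lemma lemA_width {C : Set (EuclideanSpace ℝ (Fin n))} (hb : IsBounded C) (hc : Convex ℝ C)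
    (hne : C.Nonempty) (v₀ u : EuclideanSpace ℝ (Fin n)) (b : ℝ)
    (hmb : sInf ((fun x => (inner ℝ x v₀ : ℝ)) '' C) ≤ b)
    (hbM : b < sSup ((fun x => (inner ℝ x v₀ : ℝ)) '' C)) :
    (sSup ((fun x => (inner ℝ x v₀ : ℝ)) '' C) - b) * width C u ≤
      (sSup ((fun x => (inner ℝ x v₀ : ℝ)) '' C) - sInf ((fun x => (inner ℝ x v₀ : ℝ)) '' C)) *
        width (C ∩ {x | b < (inner ℝ x v₀ : ℝ)}) u :=
  lemA hb hc hne v₀ u b hmb hbM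

lemma lemA_low_width {C : Set (EuclideanSpace ℝ (Fin n))} (hb : IsBounded C) (hc : Convex ℝ C)
    (hne : C.Nonempty) (v₀ u : EuclideanSpace ℝ (Fin n)) (b : ℝ)
    (hmb : b ≤ sSup ((fun x => (inner ℝ x v₀ : ℝ)) '' C))
    (hbM : sInf ((fun x => (inner ℝ x v₀ : ℝ)) '' C) < b) :
    (b - sInf ((fun x => (inner ℝ x v₀ : ℝ)) '' C)) * width C u ≤
      (sSup ((fun x => (inner ℝ x v₀ : ℝ)) '' C) - sInf ((fun x => (inner ℝ x v₀ : ℝ)) '' C)) *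
        width (C ∩ {x | (inner ℝ x v₀ : ℝ) < b}) u := by
  have h := lemA_width hb hc hne (-v₀) u (-b)
    (by rw [sInf_img_neg]; linarith)
    (by rw [sSup_img_neg]; linarith)
  rw [sSup_img_neg, sInf_img_neg] at h
  have hset : (C ∩ {x | -b < (inner ℝ x (-v₀) : ℝ)}) = (C ∩ {x | (inner ℝ x v₀ : ℝ) < b}) := by
    ext x
    simp [inner_neg_right]
  rw [hset] at h
  convert h using 2 <;> ring

end PlankRemovalAux

open PlankRemovalAux Bornology in
set_option maxHeartbeats 1000000 in
theorem plank_removal_induction {n k : ℕ} (hk : 0 < k)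
    (C : Set (EuclideanSpace ℝ (Fin n)))
    (hb : Bornology.IsBounded C) (hc : Convex ℝ C)
    (v : Fin k → EuclideanSpace ℝ (Fin n)) (hv : ∀ i, ‖v i‖ = 1)
    (a w : Fin k → ℝ) (hw : ∀ i, 0 ≤ w i)
    (P : Fin k → Set (EuclideanSpace ℝ (Fin n)))
    (hP : ∀ i, P i = {x | a i ≤ (inner ℝ x (v i) : ℝ) ∧ (inner ℝ x (v i) : ℝ) ≤ a i + w i})
    (hcover : C ⊆ ⋃ i, P i)
    (hconv : Convex ℝ (C \ P ⟨0, hk⟩))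
    (hind : (∃ i, i ≠ (⟨0, hk⟩ : Fin k) ∧ width (C \ P ⟨0, hk⟩) (v i) = 0) ∨
      1 ≤ ∑ i ∈ Finset.univ.erase (⟨0, hk⟩ : Fin k), w i / width (C \ P ⟨0, hk⟩) (v i)) :
    (∃ i, width C (v i) = 0) ∨ 1 ≤ ∑ i, w i / width C (v i) := by
  classical
  by_cases hz : ∃ i, width C (v i) = 0
  · exact Or.inl hz
  push_neg at hz
  right
  have hCne : C.Nonempty := by
    rw [Set.nonempty_iff_ne_empty]
    intro h
    apply hz ⟨0, hk⟩
    simp [width, h, Real.sSup_empty, Real.sInf_empty]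
  have hwnn : ∀ (K : Set (EuclideanSpace ℝ (Fin n))), IsBounded K → K.Nonempty →
      ∀ u, 0 ≤ width K u := by
    rintro K hK ⟨p, hp⟩ u
    have h1 : (inner ℝ p u : ℝ) ≤ sSup ((fun x => (inner ℝ x u : ℝ)) '' K) :=
      le_csSup (bddAbove_img hK u) ⟨p, hp, rfl⟩
    have h2 : sInf ((fun x => (inner ℝ x u : ℝ)) '' K) ≤ (inner ℝ p u : ℝ) :=
      csInf_le (bddBelow_img hK u) ⟨p, hp, rfl⟩
    have : width K u = sSup ((fun x => (inner ℝ x u : ℝ)) '' K) -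
        sInf ((fun x => (inner ℝ x u : ℝ)) '' K) := rfl
    linarith
  have hwpos : ∀ i, 0 < width C (v i) := fun i =>
    lt_of_le_of_ne (hwnn C hb hCne (v i)) (Ne.symm (hz i))
  set i₀ : Fin k := (⟨0, hk⟩ : Fin k) with hi₀
  rcases le_or_gt (width C (v i₀)) (w i₀) with hwW | hwW
  · have h0 : 1 ≤ w i₀ / width C (v i₀) := (one_le_div (hwpos i₀)).mpr hwW
    have hrest : 0 ≤ ∑ i ∈ Finset.univ.erase i₀, w i / width C (v i) :=
      Finset.sum_nonneg fun i _ => div_nonneg (hw i) (hwpos i).le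
    rw [← Finset.add_sum_erase _ _ (Finset.mem_univ i₀)]
    linarith
  · set f : EuclideanSpace ℝ (Fin n) → ℝ := fun x => (inner ℝ x (v i₀) : ℝ) with hfdef
    have hPm : ∀ x, x ∈ P i₀ ↔ (a i₀ ≤ f x ∧ f x ≤ a i₀ + w i₀) := by
      intro x; rw [hP i₀]; exact Iff.rfl
    have hWeq : width C (v i₀) = sSup (f '' C) - sInf (f '' C) := rfl
    have hC'ne : (C \ P i₀).Nonempty := by
      rw [Set.nonempty_iff_ne_empty]
      intro h
      have hsub : C ⊆ P i₀ := Set.diff_eq_empty.mp h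
      have h1 : sSup (f '' C) ≤ a i₀ + w i₀ := csSup_le (hCne.image f)
        (by rintro _ ⟨x, hx, rfl⟩; exact ((hPm x).mp (hsub hx)).2)
      have h2 : a i₀ ≤ sInf (f '' C) := le_csInf (hCne.image f)
        (by rintro _ ⟨x, hx, rfl⟩; exact ((hPm x).mp (hsub hx)).1)
      rw [hWeq] at hwW
      linarith
    have hout : ∀ x ∈ C \ P i₀, f x < a i₀ ∨ a i₀ + w i₀ < f x := by
      rintro x ⟨hxC, hxP⟩
      rw [hPm] at hxP
      push_neg at hxP
      rcases lt_or_ge (f x) (a i₀) with h | h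
      · exact Or.inl h
      · exact Or.inr (hxP h)
    have hside : (∀ x ∈ C \ P i₀, a i₀ + w i₀ < f x) ∨ (∀ x ∈ C \ P i₀, f x < a i₀) := by
      by_contra hcon
      push_neg at hcon
      obtain ⟨⟨x, hx, hx2⟩, ⟨y, hy, hy2⟩⟩ := hcon
      have hxlt : f x < a i₀ := (hout x hx).resolve_right (not_lt.mpr hx2)
      have hygt : a i₀ + w i₀ < f y := (hout y hy).resolve_left (not_lt.mpr hy2)
      have hden : (0:ℝ) < f y - f x := by linarith [hw i₀]
      set lam : ℝ := (a i₀ - f x) / (f y - f x) with hlam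
      have hl0 : 0 ≤ lam := div_nonneg (by linarith) hden.le
      have hl1 : lam ≤ 1 := by rw [hlam, div_le_one hden]; linarith [hw i₀]
      have hp : (1 - lam) • x + lam • y ∈ C \ P i₀ :=
        hconv hx hy (by linarith) hl0 (by ring)
      have hlmul : lam * (f y - f x) = a i₀ - f x := div_mul_cancel₀ _ hden.ne'
      have hfp : f ((1 - lam) • x + lam • y) = (1 - lam) * f x + lam * f y := by
        simp only [hfdef, inner_add_left, real_inner_smul_left]
      have hfpa : f ((1 - lam) • x + lam • y) = a i₀ := by
        rw [hfp]; linarith only [hlmul]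
      exact hp.2 ((hPm _).mpr ⟨le_of_eq hfpa.symm, by rw [hfpa]; linarith [hw i₀]⟩)
    have claimK : ∀ u, (width C (v i₀) - w i₀) * width C u ≤
        width C (v i₀) * width (C \ P i₀) u := by
      intro u
      have hwidnn : 0 ≤ width C u := hwnn C hb hCne u
      rcases hside with hup | hlow
      · -- C \ P i₀ lies above the plank
        by_cases hex : ∃ x ∈ C, f x ≤ a i₀ + w i₀
        · have hCeq : C \ P i₀ = C ∩ {x | a i₀ + w i₀ < f x} := by
            ext x
            constructor
            · intro hx; exact ⟨hx.1, hup x hx⟩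
            · rintro ⟨hxC, hxgt⟩
              exact ⟨hxC, fun hxP => absurd ((hPm x).mp hxP).2 (not_le.mpr hxgt)⟩
          have hbM : a i₀ + w i₀ < sSup (f '' C) := by
            obtain ⟨z, hzC⟩ := hC'ne
            have h1 := hup z hzC
            have h2 : f z ≤ sSup (f '' C) := le_csSup (bddAbove_img hb _) ⟨z, hzC.1, rfl⟩
            linarith
          obtain ⟨x0, hx0C, hx0⟩ := hex
          have hmb : sInf (f '' C) ≤ a i₀ + w i₀ :=
            le_trans (csInf_le (bddBelow_img hb _) ⟨x0, hx0C, rfl⟩) hx0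
          have hma : a i₀ ≤ sInf (f '' C) := le_csInf (hCne.image f) (by
            rintro _ ⟨x, hx, rfl⟩
            by_cases hxP : x ∈ P i₀
            · exact ((hPm x).mp hxP).1
            · have := hup x ⟨hx, hxP⟩; linarith [hw i₀])
          have key := lemA_width hb hc hCne (v i₀) u (a i₀ + w i₀) hmb hbM
          rw [← hCeq] at key
          calc (width C (v i₀) - w i₀) * width C u
              ≤ (sSup (f '' C) - (a i₀ + w i₀)) * width C u := by
                apply mul_le_mul_of_nonneg_right _ hwidnn
                rw [hWeq]; linarith
            _ ≤ width C (v i₀) * width (C \ P i₀) u := by rw [hWeq]; exact key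
        · push_neg at hex
          have hCeq2 : C \ P i₀ = C := by
            ext x
            constructor
            · exact fun hx => hx.1
            · intro hx
              exact ⟨hx, fun hxP => absurd ((hPm x).mp hxP).2 (not_le.mpr (hex x hx))⟩
          rw [hCeq2]
          apply mul_le_mul_of_nonneg_right _ hwidnn
          linarith [hw i₀]
      · -- C \ P i₀ lies below the plank
        by_cases hex : ∃ x ∈ C, a i₀ ≤ f x
        · have hCeq : C \ P i₀ = C ∩ {x | f x < a i₀} := by
            ext x
            constructor
            · intro hx; exact ⟨hx.1, hlow x hx⟩
            · rintro ⟨hxC, hxlt⟩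
              exact ⟨hxC, fun hxP => absurd ((hPm x).mp hxP).1 (not_le.mpr hxlt)⟩
          have hbm : sInf (f '' C) < a i₀ := by
            obtain ⟨z, hzC⟩ := hC'ne
            have h1 := hlow z hzC
            have h2 : sInf (f '' C) ≤ f z := csInf_le (bddBelow_img hb _) ⟨z, hzC.1, rfl⟩
            linarith
          obtain ⟨x0, hx0C, hx0⟩ := hex
          have hmb : a i₀ ≤ sSup (f '' C) :=
            le_trans hx0 (le_csSup (bddAbove_img hb _) ⟨x0, hx0C, rfl⟩)
          have hMa : sSup (f '' C) ≤ a i₀ + w i₀ := csSup_le (hCne.image f) (by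
            rintro _ ⟨x, hx, rfl⟩
            by_cases hxP : x ∈ P i₀
            · exact ((hPm x).mp hxP).2
            · have := hlow x ⟨hx, hxP⟩; linarith [hw i₀])
          have key := lemA_low_width hb hc hCne (v i₀) u (a i₀) hmb hbm
          rw [← hCeq] at key
          calc (width C (v i₀) - w i₀) * width C u
              ≤ (a i₀ - sInf (f '' C)) * width C u := by
                apply mul_le_mul_of_nonneg_right _ hwidnn
                rw [hWeq]; linarith
            _ ≤ width C (v i₀) * width (C \ P i₀) u := by rw [hWeq]; exact key
        · push_neg at hex
          have hCeq2 : C \ P i₀ = C := by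
            ext x
            constructor
            · exact fun hx => hx.1
            · intro hx
              exact ⟨hx, fun hxP => absurd ((hPm x).mp hxP).1 (not_le.mpr (hex x hx))⟩
          rw [hCeq2]
          apply mul_le_mul_of_nonneg_right _ hwidnn
          linarith [hw i₀]
    -- positivity of widths of the remainder
    have hd'pos : ∀ i, i ≠ i₀ → 0 < width (C \ P i₀) (v i) := by
      intro i _
      have key := claimK (v i)
      have h1 : 0 < (width C (v i₀) - w i₀) * width C (v i) :=
        mul_pos (by linarith) (hwpos i)
      by_contra h
      push_neg at h
      have h2 : width C (v i₀) * width (C \ P i₀) (v i) ≤ 0 :=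
        mul_nonpos_of_nonneg_of_nonpos (hwpos i₀).le h
      linarith
    rcases hind with ⟨i, hi, hzero⟩ | hind1
    · exact absurd hzero (hd'pos i hi).ne'
    have hterm : ∀ i ∈ Finset.univ.erase i₀,
        ((width C (v i₀) - w i₀) / width C (v i₀)) * (w i / width (C \ P i₀) (v i)) ≤
          w i / width C (v i) := by
      intro i hi
      have hi' : i ≠ i₀ := Finset.ne_of_mem_erase hi
      have key := claimK (v i)
      have hd := hwpos i
      have hd' := hd'pos i hi'
      have hW := hwpos i₀
      rw [div_mul_div_comm, div_le_div_iff₀ (by positivity) hd]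
      nlinarith [mul_le_mul_of_nonneg_left key (hw i)]
    have hcoef : 0 ≤ (width C (v i₀) - w i₀) / width C (v i₀) := by
      apply div_nonneg (by linarith) (hwpos i₀).le
    have hsum1 : (width C (v i₀) - w i₀) / width C (v i₀) * 1 ≤
        (width C (v i₀) - w i₀) / width C (v i₀) *
          ∑ i ∈ Finset.univ.erase i₀, w i / width (C \ P i₀) (v i) :=
      mul_le_mul_of_nonneg_left hind1 hcoef
    have hsum2 : (width C (v i₀) - w i₀) / width C (v i₀) *
          ∑ i ∈ Finset.univ.erase i₀, w i / width (C \ P i₀) (v i) ≤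
        ∑ i ∈ Finset.univ.erase i₀, w i / width C (v i) := by
      rw [Finset.mul_sum]
      exact Finset.sum_le_sum hterm
    have hsplit : 1 = w i₀ / width C (v i₀) +
        (width C (v i₀) - w i₀) / width C (v i₀) := by
      field_simp
      rw [show w i₀ + (width C (v i₀) - w i₀) = width C (v i₀) by ring]
      exact (div_self (hwpos i₀).ne').symm
    rw [← Finset.add_sum_erase _ _ (Finset.mem_univ i₀)]
    rw [mul_one] at hsum1
    linarith
end

section
/- Let T be the closed equilateral triangle in ℝ² with side length 1. For each vertex p of T, let P_p be the plank of width 1/3 whose center line passes through p and bisects the interior angle of T at p (the plank's direction is perpendicular to this bisector). Then the three planks P_p cover T. -/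
noncomputable def vA : EuclideanSpace ℝ (Fin 2) := (WithLp.equiv 2 (Fin 2 → ℝ)).symm ![0, 0]
noncomputable def vB : EuclideanSpace ℝ (Fin 2) := (WithLp.equiv 2 (Fin 2 → ℝ)).symm ![1, 0]
noncomputable def vC : EuclideanSpace ℝ (Fin 2) :=
  (WithLp.equiv 2 (Fin 2 → ℝ)).symm ![1 / 2, Real.sqrt 3 / 2]

noncomputable def T : Set (EuclideanSpace ℝ (Fin 2)) := convexHull ℝ {vA, vB, vC}

/-- The plank of width `wd` whose center line passes through `p` in the direction of the
angle bisector at `p`; `u` is a unit vector normal to the bisector (parallel to the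
opposite side). -/
def plankAt (p u : EuclideanSpace ℝ (Fin 2)) (wd : ℝ) : Set (EuclideanSpace ℝ (Fin 2)) :=
  {x | |(inner ℝ (x - p) u : ℝ)| ≤ wd / 2}

theorem hunter_cover :
    T ⊆ plankAt vA (vC - vB) (1 / 3) ∪ plankAt vB (vC - vA) (1 / 3) ∪
      plankAt vC (vB - vA) (1 / 3) := by
  have h3 : Real.sqrt 3 * Real.sqrt 3 = 3 := Real.mul_self_sqrt (by norm_num)
  intro x hx
  rw [T, show ({vA, vB, vC} : Set _) = insert vA {vB, vC} from rfl,
    convexHull_insert ⟨vB, by simp⟩, mem_convexJoin] at hx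
  obtain ⟨p, hp, y, hy, hxy⟩ := hx
  rw [Set.mem_singleton_iff] at hp
  subst hp
  rw [convexHull_pair] at hy
  obtain ⟨u', v', hu, hv, huv, rfl⟩ := hy
  obtain ⟨s, t, hs, ht, hst, rfl⟩ := hxy
  have eA : (inner ℝ (s • vA + t • (u' • vB + v' • vC) - vA) (vC - vB) : ℝ)
      = (t * v' - t * u') / 2 := by
    simp [vA, vB, vC, PiLp.inner_apply, Fin.sum_univ_two]
    linear_combination (t * v' / 4) * h3
  have eB : (inner ℝ (s • vA + t • (u' • vB + v' • vC) - vB) (vC - vA) : ℝ)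
      = (t * v' - s) / 2 := by
    simp [vA, vB, vC, PiLp.inner_apply, Fin.sum_univ_two]
    linear_combination (t * v' / 4) * h3 + (1/2) * hst + (t/2) * huv
  have eC : (inner ℝ (s • vA + t • (u' • vB + v' • vC) - vC) (vB - vA) : ℝ)
      = (t * u' - s) / 2 := by
    simp only [vA, vB, vC, PiLp.inner_apply, Fin.sum_univ_two]
    simp
    linear_combination (1/2) * hst + (t/2) * huv
  set a := s
  set b := t * u' with hb
  set c := t * v' with hc
  have hbn : 0 ≤ b := mul_nonneg ht hu
  have hcn : 0 ≤ c := mul_nonneg ht hv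
  have habc : a + b + c = 1 := by
    rw [hb, hc]; nlinarith [hst, huv]
  have key : |(c - b) / 2| ≤ 1 / 6 ∨ |(c - a) / 2| ≤ 1 / 6 ∨ |(b - a) / 2| ≤ 1 / 6 := by
    by_contra h
    push_neg at h
    obtain ⟨h1, h2, h3'⟩ := h
    rcases lt_abs.mp h1 with h1 | h1 <;> rcases lt_abs.mp h2 with h2 | h2 <;>
      rcases lt_abs.mp h3' with h3' | h3' <;> linarith
  simp only [Set.mem_union, plankAt, Set.mem_setOf_eq, eA, eB, eC]
  norm_num
  rcases key with k | k | k
  · left; left; linarith [k]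
  · left; right; linarith [k]
  · right; linarith [k]
end

section
/- Let C be a bounded convex subset of ℝⁿ, V a unit vector, and suppose inf_{x∈C} ⟨x,V⟩ = 0 and w_V(C) > 0. Let 0 < s < w_V(C) and X = {x ∈ C : ⟨x,V⟩ ≤ s}. Then for every unit vector v, w_v(X) ≥ (s / w_V(C)) · w_v(C). -/
theorem width_slice_ge {n : ℕ} (C : Set (EuclideanSpace ℝ (Fin n)))
    (hb : Bornology.IsBounded C) (hc : Convex ℝ C)
    (V : EuclideanSpace ℝ (Fin n)) (hV : ‖V‖ = 1)
    (hinf : sInf ((fun x => (inner ℝ x V : ℝ)) '' C) = 0)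
    (hwC : 0 < width C V)
    (s : ℝ) (hs0 : 0 < s) (hs1 : s < width C V)
    (X : Set (EuclideanSpace ℝ (Fin n)))
    (hXdef : X = {x ∈ C | (inner ℝ x V : ℝ) ≤ s})
    (v : EuclideanSpace ℝ (Fin n)) (hv : ‖v‖ = 1) :
    width X v ≥ (s / width C V) * width C v := by
  obtain ⟨R, hR⟩ := isBounded_iff_forall_norm_le.mp hb
  -- C is nonempty
  have hCne : C.Nonempty := by
    rcases C.eq_empty_or_nonempty with h | h
    · exfalso; simp [width, h, Real.sSup_empty, Real.sInf_empty] at hwC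
    · exact h
  -- generic bounds on images
  have hbound : ∀ (u : EuclideanSpace ℝ (Fin n)), ‖u‖ = 1 →
      ∀ x ∈ C, |(inner ℝ x u : ℝ)| ≤ R := by
    intro u hu x hx
    calc |(inner ℝ x u : ℝ)| ≤ ‖x‖ * ‖u‖ := abs_real_inner_le_norm x u
    _ = ‖x‖ := by rw [hu, mul_one]
    _ ≤ R := hR x hx
  have bddA : ∀ (u : EuclideanSpace ℝ (Fin n)), ‖u‖ = 1 →
      BddAbove ((fun x => (inner ℝ x u : ℝ)) '' C) := by
    intro u hu
    exact ⟨R, by rintro a ⟨x, hx, rfl⟩; exact (abs_le.mp (hbound u hu x hx)).2⟩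
  have bddB : ∀ (u : EuclideanSpace ℝ (Fin n)), ‖u‖ = 1 →
      BddBelow ((fun x => (inner ℝ x u : ℝ)) '' C) := by
    intro u hu
    exact ⟨-R, by rintro a ⟨x, hx, rfl⟩; exact (abs_le.mp (hbound u hu x hx)).1⟩
  have hXC : X ⊆ C := by rw [hXdef]; exact fun x hx => hx.1
  have bddAX : BddAbove ((fun x => (inner ℝ x v : ℝ)) '' X) :=
    (bddA v hv).mono (Set.image_mono hXC)
  have bddBX : BddBelow ((fun x => (inner ℝ x v : ℝ)) '' X) :=
    (bddB v hv).mono (Set.image_mono hXC)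
  set w : ℝ := width C V with hwdef
  have hw_sup : w = sSup ((fun x => (inner ℝ x V : ℝ)) '' C) := by
    rw [hwdef]; unfold width; rw [hinf]; ring
  -- key step
  have key : ∀ c : ℝ, 0 < c → c < s / w → c * width C v ≤ width X v := by
    intro c hc0 hc1
    have hcw : c * w < s := (lt_div_iff₀ hwC).mp hc1
    have hsw1 : s / w < 1 := (div_lt_one hwC).mpr hs1
    have hc1' : c < 1 := hc1.trans hsw1
    set ε : ℝ := (s - c * w) / (1 - c) with hεdef
    have hε : 0 < ε := div_pos (by linarith) (by linarith)
    -- pick y ∈ C with ⟨y, V⟩ < ε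
    have himne : ((fun x => (inner ℝ x V : ℝ)) '' C).Nonempty := hCne.image _
    obtain ⟨a, ⟨y, hyC, rfl⟩, hya⟩ := exists_lt_of_csInf_lt himne (by rw [hinf]; exact hε)
    -- membership lemma
    have hz : ∀ x ∈ C, c • x + (1 - c) • y ∈ X := by
      intro x hx
      have hzC : c • x + (1 - c) • y ∈ C :=
        hc hx hyC hc0.le (by linarith) (by ring)
      rw [hXdef]
      refine ⟨hzC, ?_⟩
      have hfx : (inner ℝ x V : ℝ) ≤ w := by
        rw [hw_sup]
        exact le_csSup (bddA V hV) ⟨x, hx, rfl⟩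
      have : (inner ℝ (c • x + (1 - c) • y) V : ℝ)
          = c * (inner ℝ x V : ℝ) + (1 - c) * (inner ℝ y V : ℝ) := by
        rw [inner_add_left, real_inner_smul_left, real_inner_smul_left]
      rw [this]
      have h1 : c * (inner ℝ x V : ℝ) ≤ c * w := by nlinarith
      have h2 : (1 - c) * (inner ℝ y V : ℝ) ≤ (1 - c) * ε := by nlinarith
      have hne : (1 : ℝ) - c ≠ 0 := by linarith
      have h3 : (1 - c) * ε = s - c * w := by
        rw [hεdef]; field_simp
      linarith
    -- pair bound
    have pair : ∀ x1 ∈ C, ∀ x2 ∈ C,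
        c * ((inner ℝ x1 v : ℝ) - (inner ℝ x2 v : ℝ)) ≤ width X v := by
      intro x1 hx1 x2 hx2
      have hz1 := hz x1 hx1
      have hz2 := hz x2 hx2
      have e1 : (inner ℝ (c • x1 + (1 - c) • y) v : ℝ)
          = c * (inner ℝ x1 v : ℝ) + (1 - c) * (inner ℝ y v : ℝ) := by
        rw [inner_add_left, real_inner_smul_left, real_inner_smul_left]
      have e2 : (inner ℝ (c • x2 + (1 - c) • y) v : ℝ)
          = c * (inner ℝ x2 v : ℝ) + (1 - c) * (inner ℝ y v : ℝ) := by
        rw [inner_add_left, real_inner_smul_left, real_inner_smul_left]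
      have le1 : (inner ℝ (c • x1 + (1 - c) • y) v : ℝ)
          ≤ sSup ((fun x => (inner ℝ x v : ℝ)) '' X) :=
        le_csSup bddAX ⟨_, hz1, rfl⟩
      have le2 : sInf ((fun x => (inner ℝ x v : ℝ)) '' X)
          ≤ (inner ℝ (c • x2 + (1 - c) • y) v : ℝ) :=
        csInf_le bddBX ⟨_, hz2, rfl⟩
      unfold width
      rw [e1] at le1; rw [e2] at le2
      linarith
    -- conclude
    have hgne : ((fun x => (inner ℝ x v : ℝ)) '' C).Nonempty := hCne.image _
    have hsup_le : sSup ((fun x => (inner ℝ x v : ℝ)) '' C)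
        ≤ width X v / c + sInf ((fun x => (inner ℝ x v : ℝ)) '' C) := by
      apply csSup_le hgne
      rintro a ⟨x1, hx1, rfl⟩
      rw [← sub_le_iff_le_add']
      apply le_csInf hgne
      rintro b ⟨x2, hx2, rfl⟩
      have := pair x1 hx1 x2 hx2
      rw [sub_le_iff_le_add, ← sub_le_iff_le_add']
      exact (le_div_iff₀ hc0).mpr (by linarith)
    have : width C v ≤ width X v / c := by
      unfold width at hsup_le ⊢; linarith
    calc c * width C v ≤ c * (width X v / c) :=
          mul_le_mul_of_nonneg_left this hc0.le
    _ = width X v := by field_simp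
  -- limiting argument
  have hA : 0 < s / w := div_pos hs0 hwC
  have hwv : 0 ≤ width C v := by
    obtain ⟨x, hx⟩ := hCne
    have h1 : (inner ℝ x v : ℝ) ≤ sSup ((fun x => (inner ℝ x v : ℝ)) '' C) :=
      le_csSup (bddA v hv) ⟨x, hx, rfl⟩
    have h2 : sInf ((fun x => (inner ℝ x v : ℝ)) '' C) ≤ (inner ℝ x v : ℝ) :=
      csInf_le (bddB v hv) ⟨x, hx, rfl⟩
    unfold width; linarith
  by_contra hcon
  push_neg at hcon
  rcases eq_or_lt_of_le hwv with h0 | h0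
  · have := key (s / w / 2) (by positivity) (by linarith)
    rw [← h0] at hcon this
    linarith
  · have ht : width X v / width C v < s / w := by
      rw [div_lt_iff₀ h0]; linarith
    obtain ⟨c, hc1, hc2⟩ := exists_between (max_lt ht (by linarith : s / w / 2 < s / w))
    have hc0 : 0 < c := lt_of_lt_of_le (by positivity) ((le_max_right _ _).trans hc1.le)
    have := key c hc0 hc2
    have : width X v < c * width C v := by
      have := (div_lt_iff₀ h0).mp (lt_of_le_of_lt (le_max_left _ _) hc1)
      linarith
    linarith
end

section
/- Suppose C is a bounded convex subset of ℝⁿ covered by two planks P₁, P₂ in directions v₁, v₂ with widths w₁, w₂, such that C \ P₁ is convex. Then w₁/w_{v₁}(C) + w₂/w_{v₂}(C) ≥ 1 (terms with zero denominator interpreted as +∞). -/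
set_option maxHeartbeats 1000000

lemma inner_combo {n : ℕ} (p x v : EuclideanSpace ℝ (Fin n)) (l : ℝ) :
    (inner ℝ ((1 - l) • p + l • x) v : ℝ)
      = (1 - l) * (inner ℝ p v : ℝ) + l * (inner ℝ x v : ℝ) := by
  rw [inner_add_left, real_inner_smul_left, real_inner_smul_left]

lemma aux_lemma {n : ℕ} (C : Set (EuclideanSpace ℝ (Fin n))) (hc : Convex ℝ C)
    (v₁ v₂ : EuclideanSpace ℝ (Fin n)) (a₁ a₂ w₁ w₂ M₁ m₁ M₂ m₂ : ℝ)
    (hw₁ : 0 ≤ w₁) (hw₂ : 0 ≤ w₂)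
    (hlub₁ : IsLUB ((fun x => (inner ℝ x v₁ : ℝ)) '' C) M₁)
    (hglb₁ : IsGLB ((fun x => (inner ℝ x v₁ : ℝ)) '' C) m₁)
    (hlub₂ : IsLUB ((fun x => (inner ℝ x v₂ : ℝ)) '' C) M₂)
    (hglb₂ : IsGLB ((fun x => (inner ℝ x v₂ : ℝ)) '' C) m₂)
    (hW₁ : 0 < M₁ - m₁) (hW₂ : 0 < M₂ - m₂)
    (hcov : ∀ x ∈ C, (a₁ ≤ (inner ℝ x v₁ : ℝ) ∧ (inner ℝ x v₁ : ℝ) ≤ a₁ + w₁)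
        ∨ (a₂ ≤ (inner ℝ x v₂ : ℝ) ∧ (inner ℝ x v₂ : ℝ) ≤ a₂ + w₂))
    (hub : ∀ x ∈ C, (inner ℝ x v₁ : ℝ) ≤ a₁ + w₁) :
    1 ≤ w₁ / (M₁ - m₁) + w₂ / (M₂ - m₂) := by
  by_cases hcase : M₁ - m₁ ≤ w₁
  · have h1 : 1 ≤ w₁ / (M₁ - m₁) := (one_le_div hW₁).2 hcase
    have h2 : 0 ≤ w₂ / (M₂ - m₂) := div_nonneg hw₂ hW₂.le
    linarith
  push_neg at hcase
  -- M₁ ≤ a₁ + w₁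
  have hM1ub : M₁ ≤ a₁ + w₁ := hlub₁.2 (by rintro y ⟨x, hx, rfl⟩; exact hub x hx)
  by_cases hMa : M₁ < a₁
  · -- everything has inner x v₁ ≤ M₁ < a₁, so all of C is in P₂
    have hall : ∀ x ∈ C, a₂ ≤ (inner ℝ x v₂ : ℝ) ∧ (inner ℝ x v₂ : ℝ) ≤ a₂ + w₂ := by
      intro x hx
      refine (hcov x hx).resolve_left ?_
      have hxM : (inner ℝ x v₁ : ℝ) ≤ M₁ := hlub₁.1 ⟨x, hx, rfl⟩
      rintro ⟨h1, -⟩; linarith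
    have h1 : M₂ ≤ a₂ + w₂ := hlub₂.2 (by rintro y ⟨x, hx, rfl⟩; exact (hall x hx).2)
    have h2 : a₂ ≤ m₂ := hglb₂.2 (by rintro y ⟨x, hx, rfl⟩; exact (hall x hx).1)
    have h3 : 1 ≤ w₂ / (M₂ - m₂) := (one_le_div hW₂).2 (by linarith)
    have h4 : 0 ≤ w₁ / (M₁ - m₁) := div_nonneg hw₁ hW₁.le
    linarith
  push_neg at hMa
  have hma : m₁ < a₁ := by linarith
  by_contra hcon
  push_neg at hcon
  have hgap : 0 < (M₁ - m₁ - w₁) * (M₂ - m₂) - w₂ * (M₁ - m₁) := by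
    rw [div_add_div _ _ hW₁.ne' hW₂.ne', div_lt_one (mul_pos hW₁ hW₂)] at hcon
    nlinarith
  set G : ℝ := (M₁ - m₁ - w₁) * (M₂ - m₂) - w₂ * (M₁ - m₁) with hG
  set K : ℝ := 2 * (M₁ - m₁ - w₁) + (M₂ - m₂) + w₂ with hKdef
  have hK : 0 < K := by simp only [hKdef]; linarith
  set δ : ℝ := min (G / (2 * K)) (min ((M₂ - m₂) / 4) ((M₁ - m₁ - w₁) / 2)) with hδdef
  have hδ : 0 < δ := by
    refine lt_min (by positivity) (lt_min (by linarith) (by linarith))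
  have hδ1 : δ ≤ G / (2 * K) := min_le_left _ _
  have hδ2 : δ ≤ (M₂ - m₂) / 4 := le_trans (min_le_right _ _) (min_le_left _ _)
  have hδ3 : δ ≤ (M₁ - m₁ - w₁) / 2 := le_trans (min_le_right _ _) (min_le_right _ _)
  have hδK : 2 * K * δ ≤ G := by
    have h := (le_div_iff₀ (show (0:ℝ) < 2 * K by positivity)).1 hδ1
    linarith
  -- pick p near the infimum in direction v₁
  obtain ⟨_, ⟨p, hpC, rfl⟩, hp1, hp2⟩ := hglb₁.exists_between (show m₁ < m₁ + δ by linarith)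
  -- pick x near sup, y near inf in direction v₂
  obtain ⟨_, ⟨x, hxC, rfl⟩, hx1, hx2⟩ := hlub₂.exists_between (show M₂ - δ < M₂ by linarith)
  obtain ⟨_, ⟨y, hyC, rfl⟩, hy1, hy2⟩ := hglb₂.exists_between (show m₂ < m₂ + δ by linarith)
  have hpM : (inner ℝ p v₁ : ℝ) ≤ M₁ := hlub₁.1 ⟨p, hpC, rfl⟩
  set A : ℝ := a₁ - (inner ℝ p v₁ : ℝ) with hAdef
  set B : ℝ := M₁ - (inner ℝ p v₁ : ℝ) + δ with hBdef
  have hA : 0 < A := by simp only [hAdef]; linarith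
  have hB : 0 < B := by simp only [hBdef]; linarith
  set l : ℝ := A / B with hldef
  have hl0 : 0 < l := div_pos hA hB
  have hl1 : l ≤ 1 := (div_le_one hB).2 (by simp only [hAdef, hBdef]; linarith)
  have hlB : l * B = A := div_mul_cancel₀ _ hB.ne'
  -- the two pulled-in points
  have hmem : ∀ z ∈ C, (1 - l) • p + l • z ∈ C := fun z hz =>
    hc hpC hz (by linarith) hl0.le (by ring)
  have hlt : ∀ z ∈ C, (inner ℝ ((1 - l) • p + l • z) v₁ : ℝ) < a₁ := by
    intro z hz
    rw [inner_combo]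
    have hzM : (inner ℝ z v₁ : ℝ) ≤ M₁ := hlub₁.1 ⟨z, hz, rfl⟩
    nlinarith [mul_le_mul_of_nonneg_left hzM hl0.le, mul_pos hl0 hδ]
  have hin : ∀ z ∈ C, a₂ ≤ (inner ℝ ((1 - l) • p + l • z) v₂ : ℝ)
      ∧ (inner ℝ ((1 - l) • p + l • z) v₂ : ℝ) ≤ a₂ + w₂ := by
    intro z hz
    refine (hcov _ (hmem z hz)).resolve_left ?_
    rintro ⟨h1, -⟩
    exact absurd h1 (not_le.2 (hlt z hz))
  have hx' := hin x hxC
  have hy' := hin y hyC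
  rw [inner_combo] at hx' hy'
  -- main estimate : l * (W₂ - 2δ) ≤ w₂
  have hkey : l * (M₂ - m₂ - 2 * δ) ≤ w₂ := by nlinarith [hx'.2, hy'.1]
  -- lower bound on l : l * (W₁ + δ) ≥ W₁ - w₁ - δ
  have hlow : M₁ - m₁ - w₁ - δ ≤ l * (M₁ - m₁ + δ) := by
    have hBle : B ≤ M₁ - m₁ + δ := by simp only [hBdef]; linarith
    have hAge : M₁ - m₁ - w₁ - δ ≤ A := by simp only [hAdef]; linarith
    nlinarith [mul_le_mul_of_nonneg_left hBle hl0.le]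
  -- combine to contradiction
  have hW2δ : 0 < M₂ - m₂ - 2 * δ := by linarith
  have hprod : (M₁ - m₁ - w₁ - δ) * (M₂ - m₂ - 2 * δ) ≤ w₂ * (M₁ - m₁ + δ) := by
    nlinarith [mul_le_mul_of_nonneg_right hlow hW2δ.le,
      mul_le_mul_of_nonneg_right hkey (show (0:ℝ) ≤ M₁ - m₁ + δ by linarith)]
  have : G ≤ K * δ := by simp only [hG, hKdef]; nlinarith
  nlinarith

theorem two_plank_inequality {n : ℕ} (C : Set (EuclideanSpace ℝ (Fin n)))
    (hb : Bornology.IsBounded C) (hc : Convex ℝ C)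
    (v₁ v₂ : EuclideanSpace ℝ (Fin n)) (hv₁ : ‖v₁‖ = 1) (hv₂ : ‖v₂‖ = 1)
    (a₁ a₂ w₁ w₂ : ℝ) (hw₁ : 0 ≤ w₁) (hw₂ : 0 ≤ w₂)
    (P₁ P₂ : Set (EuclideanSpace ℝ (Fin n)))
    (hP₁ : P₁ = {x | a₁ ≤ (inner ℝ x v₁ : ℝ) ∧ (inner ℝ x v₁ : ℝ) ≤ a₁ + w₁})
    (hP₂ : P₂ = {x | a₂ ≤ (inner ℝ x v₂ : ℝ) ∧ (inner ℝ x v₂ : ℝ) ≤ a₂ + w₂})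
    (hcover : C ⊆ P₁ ∪ P₂)
    (hconv : Convex ℝ (C \ P₁)) :
    (width C v₁ = 0 ∨ width C v₂ = 0) ∨ 1 ≤ w₁ / width C v₁ + w₂ / width C v₂ := by
  by_cases hCne : C.Nonempty
  swap
  · rw [Set.not_nonempty_iff_eq_empty] at hCne
    subst hCne
    left; left
    simp [width, Real.sSup_empty, Real.sInf_empty]
  obtain ⟨R, hR⟩ := isBounded_iff_forall_norm_le.1 hb
  have hbdda : ∀ v : EuclideanSpace ℝ (Fin n),
      BddAbove ((fun x => (inner ℝ x v : ℝ)) '' C) := by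
    intro v
    refine ⟨R * ‖v‖, ?_⟩
    rintro y ⟨x, hx, rfl⟩
    calc (inner ℝ x v : ℝ) ≤ |(inner ℝ x v : ℝ)| := le_abs_self _
      _ ≤ ‖x‖ * ‖v‖ := abs_real_inner_le_norm x v
      _ ≤ R * ‖v‖ := mul_le_mul_of_nonneg_right (hR x hx) (norm_nonneg v)
  have hbddb : ∀ v : EuclideanSpace ℝ (Fin n),
      BddBelow ((fun x => (inner ℝ x v : ℝ)) '' C) := by
    intro v
    refine ⟨-(R * ‖v‖), ?_⟩
    rintro y ⟨x, hx, rfl⟩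
    have h1 : |(inner ℝ x v : ℝ)| ≤ R * ‖v‖ :=
      le_trans (abs_real_inner_le_norm x v)
        (mul_le_mul_of_nonneg_right (hR x hx) (norm_nonneg v))
    have := abs_le.1 h1
    linarith [this.1]
  have hlub : ∀ v : EuclideanSpace ℝ (Fin n),
      IsLUB ((fun x => (inner ℝ x v : ℝ)) '' C)
        (sSup ((fun x => (inner ℝ x v : ℝ)) '' C)) :=
    fun v => isLUB_csSup (hCne.image _) (hbdda v)
  have hglb : ∀ v : EuclideanSpace ℝ (Fin n),
      IsGLB ((fun x => (inner ℝ x v : ℝ)) '' C)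
        (sInf ((fun x => (inner ℝ x v : ℝ)) '' C)) :=
    fun v => isGLB_csInf (hCne.image _) (hbddb v)
  have hwidth_nonneg : ∀ v : EuclideanSpace ℝ (Fin n), 0 ≤ width C v := by
    intro v
    obtain ⟨x, hx⟩ := hCne
    have h1 := (hglb v).1 ⟨x, hx, rfl⟩
    have h2 := (hlub v).1 ⟨x, hx, rfl⟩
    simp only [width]; linarith
  by_cases hW1 : width C v₁ = 0
  · exact Or.inl (Or.inl hW1)
  by_cases hW2 : width C v₂ = 0
  · exact Or.inl (Or.inr hW2)
  right
  have hW1pos : 0 < width C v₁ := lt_of_le_of_ne (hwidth_nonneg v₁) (Ne.symm hW1)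
  have hW2pos : 0 < width C v₂ := lt_of_le_of_ne (hwidth_nonneg v₂) (Ne.symm hW2)
  have hW1eq : width C v₁
      = sSup ((fun x => (inner ℝ x v₁ : ℝ)) '' C) - sInf ((fun x => (inner ℝ x v₁ : ℝ)) '' C) := rfl
  have hW2eq : width C v₂
      = sSup ((fun x => (inner ℝ x v₂ : ℝ)) '' C) - sInf ((fun x => (inner ℝ x v₂ : ℝ)) '' C) := rfl
  by_cases hsub : C ⊆ P₁
  · -- C ⊆ P₁, so width₁ ≤ w₁
    have h1 : sSup ((fun x => (inner ℝ x v₁ : ℝ)) '' C) ≤ a₁ + w₁ :=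
      (hlub v₁).2 (by rintro y ⟨x, hx, rfl⟩; exact ((hP₁ ▸ hsub hx : _)).2)
    have h2 : a₁ ≤ sInf ((fun x => (inner ℝ x v₁ : ℝ)) '' C) :=
      (hglb v₁).2 (by rintro y ⟨x, hx, rfl⟩; exact ((hP₁ ▸ hsub hx : _)).1)
    have h3 : 1 ≤ w₁ / width C v₁ := (one_le_div hW1pos).2 (by rw [hW1eq]; linarith)
    have h4 : 0 ≤ w₂ / width C v₂ := div_nonneg hw₂ hW2pos.le
    linarith
  -- side dichotomy for points outside P₁
  have hd' : ∀ x ∈ C \ P₁, (inner ℝ x v₁ : ℝ) < a₁ ∨ a₁ + w₁ < (inner ℝ x v₁ : ℝ) := by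
    rintro x ⟨hxC, hxP⟩
    rw [hP₁, Set.mem_setOf_eq, not_and_or, not_le, not_le] at hxP
    exact hxP
  -- one sided : C \ P₁ lies on one side of the plank
  have hone : (∀ x ∈ C \ P₁, (inner ℝ x v₁ : ℝ) < a₁)
      ∨ (∀ x ∈ C \ P₁, a₁ + w₁ < (inner ℝ x v₁ : ℝ)) := by
    by_contra hcon
    push_neg at hcon
    obtain ⟨⟨x₂, hx₂, hge₂⟩, ⟨x₁, hx₁, hle₁⟩⟩ := hcon
    have h2 : a₁ + w₁ < (inner ℝ x₂ v₁ : ℝ) := (hd' x₂ hx₂).resolve_left (not_lt.2 hge₂)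
    have h1 : (inner ℝ x₁ v₁ : ℝ) < a₁ := (hd' x₁ hx₁).resolve_right (not_lt.2 hle₁)
    set t : ℝ := (a₁ - (inner ℝ x₁ v₁ : ℝ)) / ((inner ℝ x₂ v₁ : ℝ) - (inner ℝ x₁ v₁ : ℝ)) with htdef
    have hden : (0:ℝ) < (inner ℝ x₂ v₁ : ℝ) - (inner ℝ x₁ v₁ : ℝ) := by linarith
    have ht0 : 0 ≤ t := div_nonneg (by linarith) hden.le
    have ht1 : t ≤ 1 := (div_le_one hden).2 (by linarith)
    have htB : t * ((inner ℝ x₂ v₁ : ℝ) - (inner ℝ x₁ v₁ : ℝ)) = a₁ - (inner ℝ x₁ v₁ : ℝ) :=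
      div_mul_cancel₀ _ hden.ne'
    have hz : (1 - t) • x₁ + t • x₂ ∈ C \ P₁ := hconv hx₁ hx₂ (by linarith) ht0 (by ring)
    have hzi : (inner ℝ ((1 - t) • x₁ + t • x₂) v₁ : ℝ) = a₁ := by
      rw [inner_combo]; nlinarith
    have : (1 - t) • x₁ + t • x₂ ∈ P₁ := by
      rw [hP₁, Set.mem_setOf_eq, hzi]
      exact ⟨le_refl a₁, by linarith⟩
    exact hz.2 this
  have hcovp : ∀ x ∈ C,
      (a₁ ≤ (inner ℝ x v₁ : ℝ) ∧ (inner ℝ x v₁ : ℝ) ≤ a₁ + w₁)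
        ∨ (a₂ ≤ (inner ℝ x v₂ : ℝ) ∧ (inner ℝ x v₂ : ℝ) ≤ a₂ + w₂) := by
    intro x hx
    rcases hcover hx with h | h
    · left; rw [hP₁] at h; exact h
    · right; rw [hP₂] at h; exact h
  rcases hone with hL | hR
  · -- case : outside points lie below a₁
    have hub : ∀ x ∈ C, (inner ℝ x v₁ : ℝ) ≤ a₁ + w₁ := by
      intro x hx
      by_cases hxP : x ∈ P₁
      · rw [hP₁] at hxP; exact hxP.2
      · have := hL x ⟨hx, hxP⟩; linarith
    have := aux_lemma C hc v₁ v₂ a₁ a₂ w₁ w₂ _ _ _ _ hw₁ hw₂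
      (hlub v₁) (hglb v₁) (hlub v₂) (hglb v₂)
      (by rw [← hW1eq]; exact hW1pos) (by rw [← hW2eq]; exact hW2pos) hcovp hub
    rw [← hW1eq, ← hW2eq] at this
    exact this
  · -- case : outside points lie above a₁ + w₁ ; use direction -v₁
    have himg : (fun x => (inner ℝ x (-v₁) : ℝ)) '' C
        = Neg.neg '' ((fun x => (inner ℝ x v₁ : ℝ)) '' C) := by
      rw [Set.image_image]
      exact Set.image_congr' (fun x => inner_neg_right x v₁)
    have hlubn : IsLUB ((fun x => (inner ℝ x (-v₁) : ℝ)) '' C)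
        (-(sInf ((fun x => (inner ℝ x v₁ : ℝ)) '' C))) := by
      rw [himg]
      constructor
      · rintro y ⟨z, hz, rfl⟩
        exact neg_le_neg ((hglb v₁).1 hz)
      · intro u hu
        rw [neg_le]
        refine (hglb v₁).2 ?_
        intro z hz
        have := hu ⟨z, hz, rfl⟩
        linarith
    have hglbn : IsGLB ((fun x => (inner ℝ x (-v₁) : ℝ)) '' C)
        (-(sSup ((fun x => (inner ℝ x v₁ : ℝ)) '' C))) := by
      rw [himg]
      constructor
      · rintro y ⟨z, hz, rfl⟩
        exact neg_le_neg ((hlub v₁).1 hz)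
      · intro u hu
        rw [le_neg]
        refine (hlub v₁).2 ?_
        intro z hz
        have := hu ⟨z, hz, rfl⟩
        linarith
    have hcovn : ∀ x ∈ C,
        (-(a₁ + w₁) ≤ (inner ℝ x (-v₁) : ℝ) ∧ (inner ℝ x (-v₁) : ℝ) ≤ -(a₁ + w₁) + w₁)
          ∨ (a₂ ≤ (inner ℝ x v₂ : ℝ) ∧ (inner ℝ x v₂ : ℝ) ≤ a₂ + w₂) := by
      intro x hx
      rcases hcovp x hx with h | h
      · left; rw [inner_neg_right]; constructor <;> [linarith [h.2]; linarith [h.1]]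
      · right; exact h
    have hubn : ∀ x ∈ C, (inner ℝ x (-v₁) : ℝ) ≤ -(a₁ + w₁) + w₁ := by
      intro x hx
      rw [inner_neg_right]
      by_cases hxP : x ∈ P₁
      · rw [hP₁] at hxP; linarith [hxP.1]
      · have := hR x ⟨hx, hxP⟩; linarith
    have := aux_lemma C hc (-v₁) v₂ (-(a₁ + w₁)) a₂ w₁ w₂
      (-(sInf ((fun x => (inner ℝ x v₁ : ℝ)) '' C)))
      (-(sSup ((fun x => (inner ℝ x v₁ : ℝ)) '' C))) _ _ hw₁ hw₂
      hlubn hglbn (hlub v₂) (hglb v₂)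
      (by rw [hW1eq] at hW1pos; linarith) (by rw [← hW2eq]; exact hW2pos) hcovn hubn
    have heq : -(sInf ((fun x => (inner ℝ x v₁ : ℝ)) '' C))
        - -(sSup ((fun x => (inner ℝ x v₁ : ℝ)) '' C)) = width C v₁ := by
      rw [hW1eq]; ring
    rw [heq, ← hW2eq] at this
    exact this
end
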